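/- Define v : ℝ → ℝ by v(x) := exp(−x²/2)·π^(−1/2)·∫₀^∞ exp(−t² − 2xt)·t^(−1/2) dt, and set v₋(x) := v(−x) and v₊ := v. Then the Wronskian at the origin equals √2, i.e. v₋′(0)·v₊(0) − v₋(0)·v₊′(0) = −2·v(0)·v′(0) = √2. -/

import Mathlib

open Set Real

/-- `v(x) = e^(−x²/2) · H_{−1/2}(x)` via the integral representation
`H_{−1/2}(x) = π^(−1/2) ∫₀^∞ e^(−t² − 2xt) t^(−1/2) dt`. -/
noncomputable def vFun (x : ℝ) : ℝ :=
  Real.exp (-x ^ 2 / 2) * π ^ (-(1 / 2) : ℝ) *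
    ∫ t in Set.Ioi (0 : ℝ), Real.exp (-t ^ 2 - 2 * x * t) * t ^ (-(1 / 2) : ℝ)

/-- The solution decaying at `−∞`: `v₋(x) = v(−x)`. -/
noncomputable def vMinus (x : ℝ) : ℝ := vFun (-x)

section aux

open MeasureTheory

lemma meas_aux (x : ℝ) : AEStronglyMeasurable
    (fun t : ℝ => Real.exp (-t ^ 2 - 2 * x * t) * t ^ (-(1/2) : ℝ))
    (volume.restrict (Set.Ioi 0)) := by
  apply Measurable.aestronglyMeasurable; fun_prop

lemma meas_aux' (x : ℝ) : AEStronglyMeasurable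
    (fun t : ℝ => (-2 * t) * (Real.exp (-t ^ 2 - 2 * x * t) * t ^ (-(1/2) : ℝ)))
    (volume.restrict (Set.Ioi 0)) := by
  apply Measurable.aestronglyMeasurable; fun_prop

lemma int_F0 : IntegrableOn
    (fun t : ℝ => Real.exp (-t ^ 2 - 2 * (0:ℝ) * t) * t ^ (-(1/2) : ℝ)) (Set.Ioi 0) := by
  apply (integrableOn_rpow_mul_exp_neg_mul_sq (b := 1) one_pos
    (s := -(1/2)) (by norm_num)).congr_fun ?_ measurableSet_Ioi
  intro t ht
  simp [mul_comm]

lemma int_bound : IntegrableOn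
    (fun t : ℝ => 2 * Real.exp (1/8) * (t ^ ((1:ℝ)/2) * Real.exp (-(1/2) * t ^ 2)))
    (Set.Ioi 0) := by
  exact (integrableOn_rpow_mul_exp_neg_mul_sq (b := 1/2) (by norm_num)
    (s := 1/2) (by norm_num)).const_mul _

lemma hasDerivAt_inner (t : ℝ) (x : ℝ) :
    HasDerivAt (fun x : ℝ => Real.exp (-t ^ 2 - 2 * x * t) * t ^ (-(1/2) : ℝ))
      ((-2 * t) * (Real.exp (-t ^ 2 - 2 * x * t) * t ^ (-(1/2) : ℝ))) x := by
  have h1 : HasDerivAt (fun x : ℝ => -t ^ 2 - 2 * x * t) (-2 * t) x := by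
    have := ((hasDerivAt_id x).const_mul 2).mul_const t
    exact ((hasDerivAt_const x (-t ^ 2)).sub this).congr_deriv (by ring)
  have := (h1.exp).mul_const (t ^ (-(1/2) : ℝ))
  exact this.congr_deriv (by ring)

lemma key_deriv : HasDerivAt
    (fun x : ℝ => ∫ t in Set.Ioi (0:ℝ), Real.exp (-t ^ 2 - 2 * x * t) * t ^ (-(1/2) : ℝ))
    (∫ t in Set.Ioi (0:ℝ), (-2 * t) * (Real.exp (-t ^ 2 - 2 * (0:ℝ) * t) * t ^ (-(1/2) : ℝ)))
    0 := by
  have h := hasDerivAt_integral_of_dominated_loc_of_deriv_le (μ := volume.restrict (Set.Ioi 0))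
    (F := fun x t => Real.exp (-t ^ 2 - 2 * x * t) * t ^ (-(1/2) : ℝ))
    (F' := fun x t => (-2 * t) * (Real.exp (-t ^ 2 - 2 * x * t) * t ^ (-(1/2) : ℝ)))
    (x₀ := 0)
    (bound := fun t => 2 * Real.exp (1/8) * (t ^ ((1:ℝ)/2) * Real.exp (-(1/2) * t ^ 2)))
    (s := Metric.ball 0 (1/4)) (Metric.ball_mem_nhds _ (by norm_num))
    (Filter.Eventually.of_forall fun x => meas_aux x) int_F0 (meas_aux' 0)
    ?_ int_bound ?_
  · exact h.2
  · filter_upwards [ae_restrict_mem (measurableSet_Ioi (a := (0:ℝ)))] with t ht x hx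
    have ht' : (0:ℝ) < t := ht
    rw [Metric.mem_ball, Real.dist_eq, sub_zero] at hx
    have habs : |x| < 1/4 := hx
    have hexp : Real.exp (-t ^ 2 - 2 * x * t) ≤ Real.exp (1/8) * Real.exp (-(1/2) * t ^ 2) := by
      rw [← Real.exp_add]
      apply Real.exp_le_exp.mpr
      have h1 : -2 * x * t ≤ (1/2) * t := by
        have := abs_le.mp habs.le
        nlinarith
      nlinarith [sq_nonneg (t - 1/2)]
    have hpow : t * t ^ (-(1/2) : ℝ) = t ^ ((1:ℝ)/2) := by
      calc t * t ^ (-(1/2) : ℝ) = t ^ (1:ℝ) * t ^ (-(1/2) : ℝ) := by rw [Real.rpow_one]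
        _ = t ^ ((1:ℝ)/2) := by rw [← Real.rpow_add ht']; norm_num
    have hrp : (0:ℝ) ≤ t ^ (-(1/2) : ℝ) := Real.rpow_nonneg ht'.le _
    have hy : (0:ℝ) ≤ Real.exp (-t ^ 2 - 2 * x * t) * t ^ (-(1/2) : ℝ) := by positivity
    rw [Real.norm_eq_abs, abs_mul, abs_of_nonneg hy, abs_mul, abs_neg, abs_two,
      abs_of_nonneg ht'.le]
    calc 2 * t * (Real.exp (-t ^ 2 - 2 * x * t) * t ^ (-(1/2) : ℝ))
        = 2 * (t * t ^ (-(1/2) : ℝ)) * Real.exp (-t ^ 2 - 2 * x * t) := by ring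
      _ ≤ 2 * (t * t ^ (-(1/2) : ℝ)) * (Real.exp (1/8) * Real.exp (-(1/2) * t ^ 2)) := by
          apply mul_le_mul_of_nonneg_left hexp
          positivity
      _ = 2 * Real.exp (1/8) * (t ^ ((1:ℝ)/2) * Real.exp (-(1/2) * t ^ 2)) := by
          rw [hpow]; ring
  · filter_upwards [ae_restrict_mem (measurableSet_Ioi (a := (0:ℝ)))] with t ht x _
    exact hasDerivAt_inner t x

lemma I0_val : (∫ t in Set.Ioi (0:ℝ), Real.exp (-t ^ 2 - 2 * (0:ℝ) * t) * t ^ (-(1/2) : ℝ))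
    = Real.Gamma (1/4) / 2 := by
  have h := integral_rpow_mul_exp_neg_rpow (p := 2) (q := -(1/2)) two_pos (by norm_num)
  rw [show ((-(1/2):ℝ) + 1)/2 = 1/4 by norm_num] at h
  rw [show Real.Gamma (1/4) / 2 = 1/2 * Real.Gamma (1/4) by ring, ← h]
  apply setIntegral_congr_fun measurableSet_Ioi
  intro t ht
  have h2 : t ^ ((2:ℝ)) = t ^ (2:ℕ) := by
    rw [← Real.rpow_natCast t 2]; norm_num
  simp only [h2]
  rw [mul_comm]
  norm_num

lemma I1_val : (∫ t in Set.Ioi (0:ℝ),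
      (-2 * t) * (Real.exp (-t ^ 2 - 2 * (0:ℝ) * t) * t ^ (-(1/2) : ℝ)))
    = -Real.Gamma (3/4) := by
  have h := integral_rpow_mul_exp_neg_rpow (p := 2) (q := 1/2) two_pos (by norm_num)
  rw [show ((1/2:ℝ) + 1)/2 = 3/4 by norm_num] at h
  have step : (∫ t in Set.Ioi (0:ℝ),
      (-2 * t) * (Real.exp (-t ^ 2 - 2 * (0:ℝ) * t) * t ^ (-(1/2) : ℝ)))
      = ∫ t in Set.Ioi (0:ℝ), (-2) * (t ^ ((1:ℝ)/2) * Real.exp (-t ^ (2:ℝ))) := by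
    apply setIntegral_congr_fun measurableSet_Ioi
    intro t ht
    have ht' : (0:ℝ) < t := ht
    have hpow : t * t ^ (-(1/2) : ℝ) = t ^ ((1:ℝ)/2) := by
      calc t * t ^ (-(1/2) : ℝ) = t ^ (1:ℝ) * t ^ (-(1/2) : ℝ) := by rw [Real.rpow_one]
        _ = t ^ ((1:ℝ)/2) := by rw [← Real.rpow_add ht']; norm_num
    have h2 : t ^ ((2:ℝ)) = t ^ (2:ℕ) := by
      rw [← Real.rpow_natCast t 2]; norm_num
    simp only [h2]
    calc (-2 * t) * (Real.exp (-t ^ 2 - 2 * (0:ℝ) * t) * t ^ (-(1/2) : ℝ))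
        = (-2) * ((t * t ^ (-(1/2) : ℝ)) * Real.exp (-t ^ 2 - 2 * (0:ℝ) * t)) := by ring
      _ = (-2) * (t ^ ((1:ℝ)/2) * Real.exp (-t ^ 2)) := by rw [hpow]; norm_num
  rw [step, integral_const_mul, h]
  ring

lemma hasDerivAt_vFun : HasDerivAt vFun (π ^ (-(1/2) : ℝ) * (-Real.Gamma (3/4))) 0 := by
  have hg : HasDerivAt (fun x : ℝ => Real.exp (-x ^ 2 / 2) * π ^ (-(1/2) : ℝ)) 0 0 := by
    have h1 : HasDerivAt (fun x : ℝ => -x ^ 2 / 2) 0 0 := by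
      have := ((hasDerivAt_pow 2 (0:ℝ)).neg).div_const 2
      simpa using this
    have := (h1.exp).mul_const (π ^ (-(1/2) : ℝ))
    simpa using this
  have hv := hg.mul key_deriv
  rw [I1_val] at hv
  simp only [zero_mul, zero_add] at hv
  have : Real.exp (-(0:ℝ) ^ 2 / 2) * π ^ (-(1/2) : ℝ) = π ^ (-(1/2) : ℝ) := by
    norm_num
  rw [this, mul_neg] at hv
  unfold vFun
  rw [mul_neg]
  exact hv

lemma vFun_zero : vFun 0 = π ^ (-(1/2) : ℝ) * (Real.Gamma (1/4) / 2) := by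
  unfold vFun
  rw [show (∫ t in Set.Ioi (0 : ℝ), Real.exp (-t ^ 2 - 2 * (0:ℝ) * t) * t ^ (-(1 / 2) : ℝ))
    = Real.Gamma (1/4) / 2 from I0_val]
  norm_num

lemma deriv_vFun_zero : deriv vFun 0 = π ^ (-(1/2) : ℝ) * (-Real.Gamma (3/4)) :=
  hasDerivAt_vFun.deriv

lemma deriv_vMinus_zero : deriv vMinus 0 = -(π ^ (-(1/2) : ℝ) * (-Real.Gamma (3/4))) := by
  have h0 : HasDerivAt vFun (π ^ (-(1/2) : ℝ) * (-Real.Gamma (3/4))) (-0 : ℝ) := by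
    simpa using hasDerivAt_vFun
  have h := h0.comp 0 (hasDerivAt_neg (0:ℝ))
  have h2 : HasDerivAt vMinus ((π ^ (-(1/2) : ℝ) * (-Real.Gamma (3/4))) * (-1)) 0 := h
  rw [h2.deriv]
  ring

end aux

/-- the Wronskian at the origin of the two decaying solutions of the
harmonic oscillator equals `√2`:
`v₋′(0) v₊(0) − v₋(0) v₊′(0) = −2 v(0) v′(0) = √2`. -/
theorem stmt12 :
    deriv vMinus 0 * vFun 0 - vMinus 0 * deriv vFun 0 = -2 * vFun 0 * deriv vFun 0 ∧
    -2 * vFun 0 * deriv vFun 0 = Real.sqrt 2 := by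
  have hm0 : vMinus 0 = vFun 0 := by unfold vMinus; norm_num
  constructor
  · rw [hm0, deriv_vMinus_zero, deriv_vFun_zero]
    ring
  · rw [vFun_zero, deriv_vFun_zero]
    have hpi : π ^ (-(1/2) : ℝ) * π ^ (-(1/2) : ℝ) = π⁻¹ := by
      rw [← Real.rpow_add pi_pos, show (-(1/2):ℝ) + -(1/2) = -1 by norm_num,
        Real.rpow_neg_one]
    have hG : Real.Gamma (1/4) * Real.Gamma (3/4) = π * Real.sqrt 2 := by
      have h := Real.Gamma_mul_Gamma_one_sub (1/4)
      rw [show (1:ℝ) - 1/4 = 3/4 by norm_num, show π * (1/4 : ℝ) = π/4 by ring,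
        Real.sin_pi_div_four] at h
      rw [h]
      have h2 : Real.sqrt 2 * Real.sqrt 2 = 2 := Real.mul_self_sqrt (by norm_num)
      have hs : Real.sqrt 2 ≠ 0 := by positivity
      field_simp
      nlinarith [h2, Real.pi_pos]
    have key : -2 * (π ^ (-(1/2) : ℝ) * (Real.Gamma (1/4) / 2)) *
        (π ^ (-(1/2) : ℝ) * (-Real.Gamma (3/4)))
        = π⁻¹ * (Real.Gamma (1/4) * Real.Gamma (3/4)) := by
      rw [← hpi]; ring
    rw [key, hG, ← mul_assoc, inv_mul_cancel₀ (ne_of_gt Real.pi_pos), one_mul]
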